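/- Let A be a commutative ring, F its total ring of fractions, and let P ∈ F^{n×m} be a causal plant with respect to a prime ideal Z of A containing all zerodivisors. If P is stabilizable, then the A-modules T_P and W_P are both projective. -/

import Mathlib

open Matrix

/-- The feedback matrix `H(P,C)`. -/
noncomputable def Hmat {F : Type*} [CommRing F] {n m : ℕ}
    (P : Matrix (Fin n) (Fin m) F) (C : Matrix (Fin m) (Fin n) F) :
    Matrix (Fin n ⊕ Fin m) (Fin n ⊕ Fin m) F :=
  Matrix.fromBlocks (1 + P * C)⁻¹ (-(P * (1 + C * P)⁻¹))
    (C * (1 + P * C)⁻¹) (1 + C * P)⁻¹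

/-- `C` stabilizes `P`: `det(E + PC)` is a unit of `F` and all entries of `H(P,C)`
come from `A`. -/
noncomputable def Stabilizes {A : Type*} [CommRing A] {n m : ℕ}
    (P : Matrix (Fin n) (Fin m) (FractionRing A))
    (C : Matrix (Fin m) (Fin n) (FractionRing A)) : Prop :=
  IsUnit (1 + P * C).det ∧
    ∀ i j, Hmat P C i j ∈ Set.range (algebraMap A (FractionRing A))

section Helpers

variable {A : Type*} [CommRing A] {F' : Type*} [CommRing F']

private theorem entries_mul (g : A →+* F') {ι κ ρ : Type*} [Fintype κ]
    {X : Matrix ι κ F'} {Z : Matrix κ ρ F'}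
    (hX : ∀ i j, X i j ∈ Set.range g) (hZ : ∀ i j, Z i j ∈ Set.range g) :
    ∀ i j, (X * Z) i j ∈ Set.range g := by
  choose X' hX' using hX
  choose Z' hZ' using hZ
  intro i j
  refine ⟨∑ k, X' i k * Z' k j, ?_⟩
  rw [map_sum, Matrix.mul_apply]
  exact Finset.sum_congr rfl fun k _ => by rw [_root_.map_mul, hX', hZ']

private theorem entries_one (g : A →+* F') {ι : Type*} [DecidableEq ι] :
    ∀ i j, (1 : Matrix ι ι F') i j ∈ Set.range g := by
  intro i j
  by_cases h : i = j
  · exact ⟨1, by rw [_root_.map_one, h, Matrix.one_apply_eq]⟩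
  · exact ⟨0, by simp [Matrix.one_apply_ne h]⟩

private theorem entries_sub (g : A →+* F') {ι κ : Type*} {X Z : Matrix ι κ F'}
    (hX : ∀ i j, X i j ∈ Set.range g) (hZ : ∀ i j, Z i j ∈ Set.range g) :
    ∀ i j, (X - Z) i j ∈ Set.range g := by
  intro i j
  obtain ⟨a, ha⟩ := hX i j
  obtain ⟨b, hb⟩ := hZ i j
  exact ⟨a - b, by simp [map_sub, ha, hb, Matrix.sub_apply]⟩

private theorem entries_map (g : A →+* F') {ι κ : Type*} (X : Matrix ι κ A) :
    ∀ i j, (X.map g) i j ∈ Set.range g := fun i j => ⟨X i j, rfl⟩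

/-- Key lemma: if `M` is a matrix over `A` and over the fraction field there is a
left inverse `Y` of `M` such that `M * Y` has entries in `A`, then the span of the
rows of `M` is a projective `A`-module. -/
private theorem span_rows_projective {ι κ : Type*} [Fintype ι] [Fintype κ] [DecidableEq ι] [DecidableEq κ]
    (M : Matrix ι κ A) (Y : Matrix κ ι (FractionRing A))
    (h1 : Y * M.map (algebraMap A (FractionRing A)) = 1)
    (h2 : ∀ i j, (M.map (algebraMap A (FractionRing A)) * Y) i j ∈
      Set.range (algebraMap A (FractionRing A))) :
    Module.Projective A (Submodule.span A (Set.range fun i => M i)) := by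
  classical
  set f := algebraMap A (FractionRing A) with hf_def
  have hf : Function.Injective f := IsFractionRing.injective A (FractionRing A)
  set T : Submodule A (κ → A) := Submodule.span A (Set.range fun i => M i) with hT
  have hrange : LinearMap.range M.vecMulLinear = T := by
    rw [hT]; exact range_vecMulLinear M
  have hπmem : ∀ x : ι → A, M.vecMulLinear x ∈ T := fun x => by
    rw [← hrange]; exact LinearMap.mem_range_self _ x
  let π : (ι → A) →ₗ[A] T := (M.vecMulLinear).codRestrict T hπmem
  have key : ∀ t : T, ∀ i, ((fun j => f (t.1 j)) ᵥ* Y) i ∈ Set.range f := by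
    intro t i
    have ht : t.1 ∈ LinearMap.range M.vecMulLinear := by rw [hrange]; exact t.2
    obtain ⟨x, hx⟩ := ht
    have hfx : (fun j => f (t.1 j)) = (f ∘ x) ᵥ* M.map f := by
      funext j
      rw [← hx, Matrix.vecMulLinear_apply]
      exact RingHom.map_vecMul f M x j
    rw [hfx, Matrix.vecMul_vecMul]
    choose W hW using h2
    refine ⟨∑ k, x k * W k i, ?_⟩
    rw [map_sum]
    simp only [Matrix.vecMul, dotProduct, Function.comp_apply]
    exact Finset.sum_congr rfl fun k _ => by rw [_root_.map_mul, hW]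
  choose e he using key
  have he' : ∀ t : T, (fun i => f (e t i)) = (fun j => f (t.1 j)) ᵥ* Y := by
    intro t; funext i; exact he t i
  let E : T →ₗ[A] (ι → A) :=
    { toFun := e
      map_add' := by
        intro t s
        funext i
        apply hf
        have : (fun j => f (((t + s) : T).1 j)) =
            (fun j => f (t.1 j)) + (fun j => f (s.1 j)) := by
          funext j; simp [_root_.map_add]
        calc f (e (t + s) i) = ((fun j => f (((t + s) : T).1 j)) ᵥ* Y) i := he _ i
          _ = ((fun j => f (t.1 j)) ᵥ* Y) i + ((fun j => f (s.1 j)) ᵥ* Y) i := by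
              rw [this, Matrix.add_vecMul]; rfl
          _ = f (e t i) + f (e s i) := by rw [he, he]
          _ = f ((e t + e s) i) := by simp [_root_.map_add]
      map_smul' := by
        intro a t
        funext i
        apply hf
        have : (fun j => f (((a • t) : T).1 j)) = f a • (fun j => f (t.1 j)) := by
          funext j; simp [_root_.map_mul, Algebra.smul_def]
        calc f (e (a • t) i) = ((fun j => f (((a • t) : T).1 j)) ᵥ* Y) i := he _ i
          _ = (f a • ((fun j => f (t.1 j)) ᵥ* Y)) i := by
              rw [this, Matrix.smul_vecMul]
          _ = f a * f (e t i) := by rw [Pi.smul_apply, he]; simp [smul_eq_mul]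
          _ = f ((a • e t) i) := by simp [_root_.map_mul, Algebra.smul_def]
        }
  have hsplit : π.comp E = LinearMap.id := by
    apply LinearMap.ext
    intro t
    apply Subtype.ext
    funext j
    apply hf
    have h1' : (π (E t)).1 = (e t) ᵥ* M := rfl
    rw [LinearMap.comp_apply, h1']
    calc f (((e t) ᵥ* M) j) = ((f ∘ (e t)) ᵥ* M.map f) j := RingHom.map_vecMul f M (e t) j
      _ = (((fun j => f (t.1 j)) ᵥ* Y) ᵥ* M.map f) j := by
          rw [show f ∘ (e t) = (fun j => f (t.1 j)) ᵥ* Y from he' t]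
      _ = ((fun j => f (t.1 j)) ᵥ* (Y * M.map f)) j := by rw [Matrix.vecMul_vecMul]
      _ = f (t.1 j) := by rw [h1, Matrix.vecMul_one]
    
  exact Module.Projective.of_split E π hsplit

end Helpers

/-- if a causal plant `P` is stabilizable then the modules `T_P`
(row span of any right fraction) and `W_P` (column span of any left fraction) are
projective. -/
theorem stmt_12 {A : Type*} [CommRing A] {n m : ℕ}
    (Z : Ideal A) [Z.IsPrime]
    (hZ : ∀ a : A, a ∉ nonZeroDivisors A → a ∈ Z)
    (P : Matrix (Fin n) (Fin m) (FractionRing A))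
    (hcausal : ∀ i j, ∃ na d : A, d ∉ Z ∧
      P i j * algebraMap A (FractionRing A) d = algebraMap A (FractionRing A) na)
    (hstab : ∃ C : Matrix (Fin m) (Fin n) (FractionRing A), Stabilizes P C) :
    (∀ (N : Matrix (Fin n) (Fin m) A) (D : Matrix (Fin m) (Fin m) A),
      D.det ∈ nonZeroDivisors A →
      P * D.map (algebraMap A (FractionRing A)) = N.map (algebraMap A (FractionRing A)) →
      Module.Projective A
        (Submodule.span A (Set.range fun i => Matrix.fromRows N D i))) ∧
    (∀ (Nt : Matrix (Fin n) (Fin m) A) (Dt : Matrix (Fin n) (Fin n) A),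
      Dt.det ∈ nonZeroDivisors A →
      Dt.map (algebraMap A (FractionRing A)) * P = Nt.map (algebraMap A (FractionRing A)) →
      Module.Projective A
        (Submodule.span A (Set.range fun j => (Matrix.fromCols Nt Dt)ᵀ j))) := by
  classical
  obtain ⟨C, hdet, hH⟩ := hstab
  have hdet' : IsUnit (1 + C * P).det := by
    rw [Matrix.det_one_add_mul_comm]; exact hdet
  have hQl : (1 + P * C) * (1 + P * C)⁻¹ = 1 := Matrix.mul_nonsing_inv _ hdet
  have hQr : (1 + P * C)⁻¹ * (1 + P * C) = 1 := Matrix.nonsing_inv_mul _ hdet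
  have hRl : (1 + C * P) * (1 + C * P)⁻¹ = 1 := Matrix.mul_nonsing_inv _ hdet'
  have hRr : (1 + C * P)⁻¹ * (1 + C * P) = 1 := Matrix.nonsing_inv_mul _ hdet'
  -- the commutation identity Q * P = P * R
  have hcomm : (1 + P * C) * P = P * (1 + C * P) := by
    rw [Matrix.add_mul, Matrix.mul_add, Matrix.one_mul, Matrix.mul_one, Matrix.mul_assoc]
  have hQP : (1 + P * C)⁻¹ * P = P * (1 + C * P)⁻¹ := by
    have h2' : (1 + P * C) * (P * (1 + C * P)⁻¹) = P := by
      rw [← Matrix.mul_assoc, hcomm, Matrix.mul_assoc, hRl, Matrix.mul_one]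
    have h1' : (1 + P * C)⁻¹ * ((1 + P * C) * (P * (1 + C * P)⁻¹)) = P * (1 + C * P)⁻¹ := by
      rw [← Matrix.mul_assoc, hQr, Matrix.one_mul]
    rw [h2'] at h1'
    exact h1'
  have hPCQ : (P * C) * (1 + P * C)⁻¹ = 1 - (1 + P * C)⁻¹ := by
    have h := hQl
    rw [Matrix.add_mul, Matrix.one_mul] at h
    exact eq_sub_of_add_eq' h
  have hCPR : (C * P) * (1 + C * P)⁻¹ = 1 - (1 + C * P)⁻¹ := by
    have h := hRl
    rw [Matrix.add_mul, Matrix.one_mul] at h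
    exact eq_sub_of_add_eq' h
  -- entries of the four blocks of H(P,C) lie in the image of A
  have hQmem : ∀ (i : Fin n) (j : Fin n), ((1 + P * C)⁻¹ : Matrix (Fin n) (Fin n) (FractionRing A)) i j ∈ Set.range (algebraMap A (FractionRing A)) :=
    fun i j => by
      have := hH (Sum.inl i) (Sum.inl j)
      simpa [Hmat, Matrix.fromBlocks_apply₁₁] using this
  have hRmem : ∀ (i : Fin m) (j : Fin m), ((1 + C * P)⁻¹ : Matrix (Fin m) (Fin m) (FractionRing A)) i j ∈ Set.range (algebraMap A (FractionRing A)) :=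
    fun i j => by
      have := hH (Sum.inr i) (Sum.inr j)
      simpa [Hmat, Matrix.fromBlocks_apply₂₂] using this
  have hCQmem : ∀ (i : Fin m) (j : Fin n), (C * (1 + P * C)⁻¹ : Matrix (Fin m) (Fin n) (FractionRing A)) i j ∈ Set.range (algebraMap A (FractionRing A)) :=
    fun i j => by
      have := hH (Sum.inr i) (Sum.inl j)
      simpa [Hmat, Matrix.fromBlocks_apply₂₁] using this
  have hPRmem : ∀ (i : Fin n) (j : Fin m), (P * (1 + C * P)⁻¹ : Matrix (Fin n) (Fin m) (FractionRing A)) i j ∈ Set.range (algebraMap A (FractionRing A)) :=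
    fun i j => by
      have h := hH (Sum.inl i) (Sum.inr j)
      rw [Hmat, Matrix.fromBlocks_apply₁₂, Matrix.neg_apply] at h
      obtain ⟨a, ha⟩ := h
      exact ⟨-a, by rw [_root_.map_neg, ha, neg_neg]⟩
  constructor
  · -- right fractions
    intro N D hDdet hPD
    have hDu : IsUnit ((D.map (algebraMap A (FractionRing A))).det) := by
      have hdm : (algebraMap A (FractionRing A)) D.det =
          (D.map (algebraMap A (FractionRing A))).det := RingHom.map_det _ D
      rw [← hdm]
      exact IsLocalization.map_units (FractionRing A) ⟨D.det, hDdet⟩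
    set Df := D.map (algebraMap A (FractionRing A)) with hDf
    set Nf := N.map (algebraMap A (FractionRing A)) with hNf
    have hDl : Df * Df⁻¹ = 1 := Matrix.mul_nonsing_inv _ hDu
    have hDr : Df⁻¹ * Df = 1 := Matrix.nonsing_inv_mul _ hDu
    have hmap : (Matrix.fromRows N D).map (algebraMap A (FractionRing A)) =
        Matrix.fromRows Nf Df := by
      ext (i | i) j <;> rfl
    apply span_rows_projective (Matrix.fromRows N D)
      (Matrix.fromCols (Df⁻¹ * (C * (1 + P * C)⁻¹)) (Df⁻¹ * (1 + C * P)⁻¹))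
    · rw [hmap, Matrix.fromCols_mul_fromRows]
      have hY1 : (Df⁻¹ * (C * (1 + P * C)⁻¹)) * Nf =
          Df⁻¹ * ((C * P * (1 + C * P)⁻¹) * Df) := by
        rw [← hPD]
        simp only [Matrix.mul_assoc]
        rw [← Matrix.mul_assoc ((1 + P * C)⁻¹) P Df, hQP, Matrix.mul_assoc P]
      have hY2 : (Df⁻¹ * (1 + C * P)⁻¹) * Df = Df⁻¹ * ((1 + C * P)⁻¹ * Df) :=
        Matrix.mul_assoc _ _ _
      have hone : C * P * (1 + C * P)⁻¹ + (1 + C * P)⁻¹ =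
          (1 : Matrix (Fin m) (Fin m) (FractionRing A)) := by
        rw [hCPR]; abel
      rw [hY1, hY2, ← Matrix.mul_add, ← Matrix.add_mul, hone, Matrix.one_mul, hDr]
    · rw [hmap, Matrix.fromRows_mul_fromCols]
      have e11 : Nf * (Df⁻¹ * (C * (1 + P * C)⁻¹)) = 1 - (1 + P * C)⁻¹ := by
        rw [← hPD]
        simp only [Matrix.mul_assoc]
        rw [← Matrix.mul_assoc Df, hDl, Matrix.one_mul, ← Matrix.mul_assoc, hPCQ]
      have e12 : Nf * (Df⁻¹ * (1 + C * P)⁻¹) = P * (1 + C * P)⁻¹ := by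
        rw [← hPD]
        simp only [Matrix.mul_assoc]
        rw [← Matrix.mul_assoc Df, hDl, Matrix.one_mul]
      have e21 : Df * (Df⁻¹ * (C * (1 + P * C)⁻¹)) = C * (1 + P * C)⁻¹ := by
        rw [← Matrix.mul_assoc, hDl, Matrix.one_mul]
      have e22 : Df * (Df⁻¹ * (1 + C * P)⁻¹) = (1 + C * P)⁻¹ := by
        rw [← Matrix.mul_assoc, hDl, Matrix.one_mul]
      rw [e11, e12, e21, e22]
      rintro (i | i) (j | j)
      · rw [Matrix.fromBlocks_apply₁₁]
        exact entries_sub _ (entries_one _) hQmem i j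
      · rw [Matrix.fromBlocks_apply₁₂]
        exact hPRmem i j
      · rw [Matrix.fromBlocks_apply₂₁]
        exact hCQmem i j
      · rw [Matrix.fromBlocks_apply₂₂]
        exact hRmem i j
  · -- left fractions
    intro Nt Dt hDdet hPD
    have hDu : IsUnit ((Dt.map (algebraMap A (FractionRing A))).det) := by
      have hdm : (algebraMap A (FractionRing A)) Dt.det =
          (Dt.map (algebraMap A (FractionRing A))).det := RingHom.map_det _ Dt
      rw [← hdm]
      exact IsLocalization.map_units (FractionRing A) ⟨Dt.det, hDdet⟩
    set Df := Dt.map (algebraMap A (FractionRing A)) with hDf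
    set Nf := Nt.map (algebraMap A (FractionRing A)) with hNf
    have hDl : Df * Df⁻¹ = 1 := Matrix.mul_nonsing_inv _ hDu
    have hDr : Df⁻¹ * Df = 1 := Matrix.nonsing_inv_mul _ hDu
    have hmap : ((Matrix.fromCols Nt Dt)ᵀ).map (algebraMap A (FractionRing A)) =
        (Matrix.fromCols Nf Df)ᵀ := by
      ext (i | i) j <;> rfl
    apply span_rows_projective ((Matrix.fromCols Nt Dt)ᵀ)
      ((Matrix.fromRows ((C * (1 + P * C)⁻¹) * Df⁻¹) ((1 + P * C)⁻¹ * Df⁻¹))ᵀ)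
    · rw [hmap, ← Matrix.transpose_mul, Matrix.fromCols_mul_fromRows]
      have hZ1 : Nf * ((C * (1 + P * C)⁻¹) * Df⁻¹) =
          Df * ((P * C * (1 + P * C)⁻¹) * Df⁻¹) := by
        rw [← hPD]
        simp only [Matrix.mul_assoc]
      have hone : P * C * (1 + P * C)⁻¹ + (1 + P * C)⁻¹ =
          (1 : Matrix (Fin n) (Fin n) (FractionRing A)) := by
        rw [hPCQ]; abel
      rw [hZ1, ← Matrix.mul_add, ← Matrix.add_mul, hone, Matrix.one_mul, hDl,
        Matrix.transpose_one]
    · rw [hmap, ← Matrix.transpose_mul, Matrix.fromRows_mul_fromCols]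
      have e11 : ((C * (1 + P * C)⁻¹) * Df⁻¹) * Nf = 1 - (1 + C * P)⁻¹ := by
        rw [← hPD]
        simp only [Matrix.mul_assoc]
        rw [← Matrix.mul_assoc Df⁻¹ Df P, hDr, Matrix.one_mul, hQP,
          ← Matrix.mul_assoc C P, hCPR]
      have e12 : ((C * (1 + P * C)⁻¹) * Df⁻¹) * Df = C * (1 + P * C)⁻¹ := by
        simp only [Matrix.mul_assoc]
        rw [hDr, Matrix.mul_one]
      have e21 : ((1 + P * C)⁻¹ * Df⁻¹) * Nf = P * (1 + C * P)⁻¹ := by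
        rw [← hPD]
        simp only [Matrix.mul_assoc]
        rw [← Matrix.mul_assoc Df⁻¹ Df P, hDr, Matrix.one_mul, hQP]
      have e22 : ((1 + P * C)⁻¹ * Df⁻¹) * Df = (1 + P * C)⁻¹ := by
        simp only [Matrix.mul_assoc]
        rw [hDr, Matrix.mul_one]
      rw [e11, e12, e21, e22]
      rintro (i | i) (j | j) <;>
        simp only [Matrix.transpose_apply, Matrix.fromBlocks_apply₁₁,
          Matrix.fromBlocks_apply₁₂, Matrix.fromBlocks_apply₂₁, Matrix.fromBlocks_apply₂₂]
      · exact entries_sub _ (entries_one _) hRmem j i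
      · exact hPRmem j i
      · exact hCQmem j i
      · exact hQmem j i
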